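/- arXiv:math/0611193 — 2 statements merged into one kernel-verified Lean document; each statement's English description precedes it below -/
import Mathlib

section
/- For fixed nonnegative reals a, b with b > 0 and a > 0, the function α ↦ b^{1+α} - (1 + 1/α) a b^α + (1/α) a^{1+α} tends to a·log(a/b) − a + b as α → 0⁺. -/
open Filter Topology

theorem dpd_integrand_tendsto_kl (a b : ℝ) (ha : 0 < a) (hb : 0 < b) :
    Tendsto (fun α : ℝ => b ^ (1 + α) - (1 + 1 / α) * a * b ^ α + (1 / α) * a ^ (1 + α))
      (nhdsWithin 0 (Set.Ioi 0))
      (nhds (a * Real.log (a / b) - a + b)) := by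
  have key : ∀ α : ℝ, α ≠ 0 →
      b ^ (1 + α) - (1 + 1 / α) * a * b ^ α + (1 / α) * a ^ (1 + α)
        = b ^ (1 + α) - a * b ^ α + a * ((a ^ α - b ^ α) / α) := by
    intro α hα
    rw [Real.rpow_add ha, Real.rpow_one]
    field_simp
    ring
  -- derivative limit
  have hg : HasDerivAt (fun α : ℝ => a ^ α - b ^ α) (Real.log a - Real.log b) 0 := by
    have h1 := (Real.hasStrictDerivAt_const_rpow ha 0).hasDerivAt
    have h2 := (Real.hasStrictDerivAt_const_rpow hb 0).hasDerivAt
    rw [Real.rpow_zero, one_mul] at h1 h2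
    exact h1.sub h2
  have hslope : Tendsto (fun α : ℝ => (a ^ α - b ^ α) / α) (nhdsWithin 0 (Set.Ioi 0))
      (nhds (Real.log a - Real.log b)) := by
    have := (hasDerivAt_iff_tendsto_slope.mp hg).mono_left
      (nhdsWithin_mono 0 (fun x hx => Set.mem_compl_singleton_iff.mpr (ne_of_gt hx)))
    refine this.congr' ?_
    filter_upwards [self_mem_nhdsWithin] with x hx
    have hx0 : x ≠ 0 := ne_of_gt hx
    simp [slope, Real.rpow_zero, hx0, div_eq_inv_mul]
  have hcb : Tendsto (fun α : ℝ => b ^ (1 + α)) (nhdsWithin 0 (Set.Ioi 0)) (nhds b) := by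
    have : ContinuousAt (fun α : ℝ => b ^ (1 + α)) 0 :=
      (Real.continuousAt_const_rpow hb.ne').comp (by fun_prop)
    simpa [Real.rpow_one] using this.continuousWithinAt.tendsto
  have hcb2 : Tendsto (fun α : ℝ => a * b ^ α) (nhdsWithin 0 (Set.Ioi 0)) (nhds a) := by
    have : ContinuousAt (fun α : ℝ => a * b ^ α) 0 :=
      continuousAt_const.mul (Real.continuousAt_const_rpow hb.ne')
    simpa [Real.rpow_zero] using this.continuousWithinAt.tendsto
  have hmain : Tendsto (fun α : ℝ => b ^ (1 + α) - a * b ^ α + a * ((a ^ α - b ^ α) / α))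
      (nhdsWithin 0 (Set.Ioi 0)) (nhds (b - a + a * (Real.log a - Real.log b))) :=
    (hcb.sub hcb2).add (hslope.const_mul a)
  have heq : a * Real.log (a / b) - a + b = b - a + a * (Real.log a - Real.log b) := by
    rw [Real.log_div ha.ne' hb.ne']; ring
  rw [heq]
  refine hmain.congr' ?_
  filter_upwards [self_mem_nhdsWithin] with x hx
  exact (key x (ne_of_gt hx)).symm
end

section
/- The density power divergence d_α(g,f) = 0 (with α > 0 and f, g probability densities with finite relevant integrals) if and only if f = g almost everywhere. -/
open MeasureTheory

private lemma psi_pos {α t : ℝ} (hα : 0 < α) (ht : 0 ≤ t) (hne : t ≠ 1) :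
    0 < t ^ (1 + α) - (1 + α) * t + α := by
  set ψ : ℝ → ℝ := fun t => t ^ (1 + α) - (1 + α) * t + α with hψ
  have hcont : Continuous ψ := by
    apply Continuous.add _ continuous_const
    apply Continuous.sub _ (continuous_const.mul continuous_id)
    exact Real.continuous_rpow_const (by linarith)
  have hderiv : ∀ x : ℝ, 0 < x → HasDerivAt ψ ((1 + α) * x ^ α - (1 + α)) x := by
    intro x hx
    have h := (Real.hasDerivAt_rpow_const (p := 1 + α) (Or.inl hx.ne'))
    have h2 := (h.sub ((hasDerivAt_id x).const_mul (1 + α))).add_const α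
    simpa [hψ, mul_one, add_sub_cancel_left] using h2
  have hψ1 : ψ 1 = 0 := by simp [hψ]
  rcases lt_or_gt_of_ne hne with h1 | h1
  · -- t < 1 : ψ strictly antitone on [0,1]
    have hanti : StrictAntiOn ψ (Set.Icc 0 1) := by
      apply strictAntiOn_of_deriv_neg (convex_Icc 0 1) hcont.continuousOn
      intro x hx
      rw [interior_Icc] at hx
      rw [(hderiv x hx.1).deriv]
      have : x ^ α < 1 := Real.rpow_lt_one (le_of_lt hx.1) hx.2 hα
      nlinarith
    have := hanti ⟨ht, h1.le⟩ ⟨zero_le_one, le_refl 1⟩ h1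
    rw [hψ1] at this
    exact this
  · -- 1 < t : ψ strictly monotone on [1, ∞)
    have hmono : StrictMonoOn ψ (Set.Ici 1) := by
      apply strictMonoOn_of_deriv_pos (convex_Ici 1) hcont.continuousOn
      intro x hx
      rw [interior_Ici] at hx
      have hx1 : 1 < x := hx
      rw [(hderiv x (by linarith)).deriv]
      have : 1 < x ^ α := Real.one_lt_rpow_iff_of_pos (by linarith) |>.mpr (Or.inl ⟨hx1, hα⟩)
      nlinarith
    have := hmono (Set.self_mem_Ici) (le_of_lt h1) h1
    rw [hψ1] at this
    exact this

private lemma dpd_pointwise_pos {α a b : ℝ} (hα : 0 < α) (ha : 0 ≤ a) (hb : 0 ≤ b)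
    (hne : a ≠ b) :
    0 < b ^ (1 + α) - (1 + 1 / α) * (a * b ^ α) + (1 / α) * a ^ (1 + α) := by
  rcases eq_or_lt_of_le hb with hb0 | hb0
  · -- b = 0
    rw [← hb0, Real.zero_rpow (by positivity), Real.zero_rpow hα.ne']
    have ha0 : 0 < a := lt_of_le_of_ne ha (fun h => hne (h ▸ hb0.symm ▸ rfl))
    have : 0 < a ^ (1 + α) := Real.rpow_pos_of_pos ha0 _
    have h1α : 0 < 1 / α := by positivity
    nlinarith
  · have hbα : 0 < b ^ α := Real.rpow_pos_of_pos hb0 α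
    have hbr : b ^ (1 + α) = b * b ^ α := by
      rw [Real.rpow_add hb0, Real.rpow_one]
    have ht0 : 0 ≤ a / b := div_nonneg ha hb0.le
    have ht1 : a / b ≠ 1 := fun hq => hne ((div_eq_one_iff_eq hb0.ne').mp hq)
    have hψ := psi_pos hα ht0 ht1
    have habr : (a / b) ^ (1 + α) = a ^ (1 + α) / (b * b ^ α) := by
      rw [Real.div_rpow ha hb0.le, hbr]
    rw [habr] at hψ
    have key := mul_pos (show (0:ℝ) < (1 / α) * (b * b ^ α) by positivity) hψ
    have heq : (1 / α) * (b * b ^ α) *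
        (a ^ (1 + α) / (b * b ^ α) - (1 + α) * (a / b) + α)
        = b ^ (1 + α) - (1 + 1 / α) * (a * b ^ α) + (1 / α) * a ^ (1 + α) := by
      rw [hbr]
      field_simp
      ring
    rw [heq] at key
    exact key

private lemma dpd_pointwise_eq {α b : ℝ} (hα : 0 < α) (hb : 0 ≤ b) :
    b ^ (1 + α) - (1 + 1 / α) * (b * b ^ α) + (1 / α) * b ^ (1 + α) = 0 := by
  rcases eq_or_lt_of_le hb with hb0 | hb0
  · rw [← hb0, Real.zero_rpow (by positivity), Real.zero_rpow hα.ne']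
    ring
  · rw [Real.rpow_add hb0, Real.rpow_one]
    ring

theorem dpd_eq_zero_iff_ae_eq {X : Type*} [MeasurableSpace X] (μ : Measure X)
    (f g : X → ℝ) (α : ℝ) (hα : 0 < α)
    (hf : Measurable f) (hg : Measurable g)
    (hf0 : ∀ x, 0 ≤ f x) (hg0 : ∀ x, 0 ≤ g x)
    (h1 : Integrable (fun x => f x ^ (1 + α)) μ)
    (h2 : Integrable (fun x => g x * f x ^ α) μ)
    (h3 : Integrable (fun x => g x ^ (1 + α)) μ) :
    (∫ x, f x ^ (1 + α) ∂μ)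
        - (1 + 1 / α) * ∫ x, g x * f x ^ α ∂μ
        + (1 / α) * ∫ x, g x ^ (1 + α) ∂μ = 0 ↔ f =ᵐ[μ] g := by
  set h : X → ℝ := fun x =>
    f x ^ (1 + α) - (1 + 1 / α) * (g x * f x ^ α) + (1 / α) * g x ^ (1 + α) with hh
  have hint : Integrable h μ :=
    (h1.sub (h2.const_mul (1 + 1 / α))).add (h3.const_mul (1 / α))
  have hnn : ∀ x, 0 ≤ h x := by
    intro x
    rcases eq_or_ne (g x) (f x) with heq | hne
    · rw [hh]
      simp only
      rw [heq]
      exact le_of_eq (dpd_pointwise_eq hα (hf0 x)).symm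
    · exact le_of_lt (dpd_pointwise_pos hα (hg0 x) (hf0 x) hne)
  have e1 : ∫ x, h x ∂μ = (∫ x, (f x ^ (1 + α) - (1 + 1 / α) * (g x * f x ^ α)) ∂μ)
      + ∫ x, (1 / α) * g x ^ (1 + α) ∂μ :=
    integral_add (h1.sub (h2.const_mul _)) (h3.const_mul _)
  have e2 : (∫ x, (f x ^ (1 + α) - (1 + 1 / α) * (g x * f x ^ α)) ∂μ)
      = (∫ x, f x ^ (1 + α) ∂μ) - ∫ x, (1 + 1 / α) * (g x * f x ^ α) ∂μ :=
    integral_sub h1 (h2.const_mul _)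
  have e3 : ∫ x, (1 + 1 / α) * (g x * f x ^ α) ∂μ = (1 + 1 / α) * ∫ x, g x * f x ^ α ∂μ :=
    integral_const_mul _ _
  have e4 : ∫ x, (1 / α) * g x ^ (1 + α) ∂μ = (1 / α) * ∫ x, g x ^ (1 + α) ∂μ :=
    integral_const_mul _ _
  have hLHS : (∫ x, f x ^ (1 + α) ∂μ)
        - (1 + 1 / α) * ∫ x, g x * f x ^ α ∂μ
        + (1 / α) * ∫ x, g x ^ (1 + α) ∂μ = ∫ x, h x ∂μ := by
    rw [e1, e2, e3, e4]
  rw [hLHS, integral_eq_zero_iff_of_nonneg (fun x => hnn x) hint]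
  constructor
  · intro hae
    filter_upwards [hae] with x hx
    by_contra hne
    have := dpd_pointwise_pos hα (hg0 x) (hf0 x) (fun h' => hne h'.symm)
    rw [hh] at hx
    simp only [Pi.zero_apply] at hx
    linarith [hx ▸ this]
  · intro hae
    filter_upwards [hae] with x hx
    rw [hh]
    simp only [Pi.zero_apply]
    rw [hx]
    exact dpd_pointwise_eq hα (hg0 x)
end
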